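/- If λ < 0, then the zero solution is stable: for every ε ∈ (0,d0] there exist δ > 0 and t1 ≥ t0 such that every admissible solution with v(t1) ≤ δ satisfies 0 ≤ v(t) ≤ ε for all t ≥ t1. Moreover, there exist δ > 0, t1 ≥ t0 and c > 0 such that every admissible solution with v(t1) ≤ δ satisfies: if n < q, then v(t) ≤ v(t1)·exp(−c·(t^{1−n/q} − t1^{1−n/q})) for all t ≥ t1 (exponential stability); if n = q, then v(t) ≤ v(t1)·(t/t1)^{−c} for all t ≥ t1 (polynomial stability). -/

import Mathlib

/-- An admissible solution of the reduced equation
`v'(t) = λ·t^{−n/q}·v(t) + ρ(t)` on `[t0,∞)` with values in `[0,d0]`,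
where `|ρ(t)| ≤ M·t^{−n/q}·v(t)·(v(t) + t^{−1/q})`. -/
def IsAdmissibleLin (q n : ℕ) (lam d0 t0 M : ℝ) (v : ℝ → ℝ) : Prop :=
  (∀ t ≥ t0, v t ∈ Set.Icc (0:ℝ) d0) ∧
  ∃ ρ : ℝ → ℝ,
    (∀ t ≥ t0, |ρ t| ≤ M * t ^ (-(n:ℝ)/(q:ℝ)) * v t * (v t + t ^ (-(1:ℝ)/(q:ℝ)))) ∧
    (∀ t ≥ t0, HasDerivAt v (lam * t ^ (-(n:ℝ)/(q:ℝ)) * v t + ρ t) t)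

/-- Choice of large time making the perturbation term small. -/
lemma aux_t1 (q : ℕ) (hq : 0 < q) (lam M t0 : ℝ) (hlam : lam < 0) (hM : 0 < M)
    (ht0 : 0 < t0) :
    ∃ t1, t0 ≤ t1 ∧ ∀ t ≥ t1, M * t ^ (-(1:ℝ)/(q:ℝ)) ≤ -lam/4 := by
  have hX : (0:ℝ) < 4*M/(-lam) := div_pos (by linarith) (by linarith)
  have hT0 : 0 < (4*M/(-lam)) ^ (q:ℝ) := Real.rpow_pos_of_pos hX _
  refine ⟨max t0 ((4*M/(-lam)) ^ (q:ℝ)), le_max_left _ _, ?_⟩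
  intro t ht
  have htT : (4*M/(-lam)) ^ (q:ℝ) ≤ t := le_trans (le_max_right _ _) ht
  have hqR : ((q:ℝ)) ≠ 0 := Nat.cast_ne_zero.2 hq.ne'
  have h1 : t ^ (-(1:ℝ)/(q:ℝ)) ≤ ((4*M/(-lam)) ^ (q:ℝ)) ^ (-(1:ℝ)/(q:ℝ)) :=
    Real.rpow_le_rpow_of_nonpos hT0 htT
      (div_nonpos_of_nonpos_of_nonneg (by norm_num) (by positivity))
  have h2 : ((4*M/(-lam)) ^ (q:ℝ)) ^ (-(1:ℝ)/(q:ℝ)) = -lam/(4*M) := by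
    rw [← Real.rpow_mul hX.le, show (q:ℝ) * (-(1:ℝ)/(q:ℝ)) = -1 by field_simp,
      Real.rpow_neg_one, inv_div]
  rw [h2] at h1
  calc M * t ^ (-(1:ℝ)/(q:ℝ)) ≤ M * (-lam/(4*M)) :=
        mul_le_mul_of_nonneg_left h1 hM.le
    _ = -lam/4 := by field_simp

/-- Invariance: once small, the solution stays small. -/
lemma aux_invariance (q n : ℕ) (lam t0 M : ℝ) (hlam : lam < 0) (ht0 : 0 < t0)
    (v ρ : ℝ → ℝ)
    (hρ : ∀ t ≥ t0, |ρ t| ≤ M * t ^ (-(n:ℝ)/(q:ℝ)) * v t * (v t + t ^ (-(1:ℝ)/(q:ℝ))))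
    (hderiv : ∀ t ≥ t0, HasDerivAt v (lam * t ^ (-(n:ℝ)/(q:ℝ)) * v t + ρ t) t)
    (t1 : ℝ) (ht1 : t0 ≤ t1)
    (hsmall : ∀ t ≥ t1, M * t ^ (-(1:ℝ)/(q:ℝ)) ≤ -lam/4)
    (δ : ℝ) (hδ0 : 0 < δ) (hδ : M * δ ≤ -lam/4)
    (hvt1 : v t1 ≤ δ) : ∀ t ≥ t1, v t ≤ δ := by
  intro b hb
  have key := image_le_of_deriv_right_lt_deriv_boundary
    (f := v) (f' := fun x => lam * x ^ (-(n:ℝ)/(q:ℝ)) * v x + ρ x)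
    (a := t1) (b := b) (B := fun _ => δ) (B' := fun _ => (0:ℝ))
    (fun x hx => ((hderiv x (ht1.trans hx.1)).continuousAt).continuousWithinAt)
    (fun x hx => (hderiv x (ht1.trans hx.1)).hasDerivWithinAt)
    hvt1 (fun _ => hasDerivAt_const _ _)
    (by
      intro x hx hvx
      have hxt0 : t0 ≤ x := ht1.trans hx.1
      have hx0 : 0 < x := ht0.trans_le hxt0
      have hτ : 0 < x ^ (-(n:ℝ)/(q:ℝ)) := Real.rpow_pos_of_pos hx0 _
      have hs : 0 ≤ x ^ (-(1:ℝ)/(q:ℝ)) := (Real.rpow_pos_of_pos hx0 _).le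
      have hρx : ρ x ≤ M * x ^ (-(n:ℝ)/(q:ℝ)) * δ * (δ + x ^ (-(1:ℝ)/(q:ℝ))) := by
        have := le_of_abs_le (hρ x hxt0); rwa [hvx] at this
      have hMs : M * x ^ (-(1:ℝ)/(q:ℝ)) ≤ -lam/4 := hsmall x hx.1
      have e : lam * x ^ (-(n:ℝ)/(q:ℝ)) * δ + M * x ^ (-(n:ℝ)/(q:ℝ)) * δ * (δ + x ^ (-(1:ℝ)/(q:ℝ)))
          = x ^ (-(n:ℝ)/(q:ℝ)) * δ * (lam + (M * δ + M * x ^ (-(1:ℝ)/(q:ℝ)))) := by ring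
      have h3 : x ^ (-(n:ℝ)/(q:ℝ)) * δ * (lam + (M * δ + M * x ^ (-(1:ℝ)/(q:ℝ))))
          ≤ x ^ (-(n:ℝ)/(q:ℝ)) * δ * (lam/2) :=
        mul_le_mul_of_nonneg_left (by linarith) (by positivity)
      have h4 : x ^ (-(n:ℝ)/(q:ℝ)) * δ * (lam/2) < 0 :=
        mul_neg_of_pos_of_neg (mul_pos hτ hδ0) (by linarith)
      show lam * x ^ (-(n:ℝ)/(q:ℝ)) * v x + ρ x < 0
      rw [hvx]
      linarith)
  exact key (Set.right_mem_Icc.2 hb)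

/-- The differential inequality once the solution is trapped. -/
lemma aux_derivbound (q n : ℕ) (lam t0 M : ℝ) (hlam : lam < 0) (ht0 : 0 < t0) (hM : 0 < M)
    (v ρ : ℝ → ℝ)
    (hρ : ∀ t ≥ t0, |ρ t| ≤ M * t ^ (-(n:ℝ)/(q:ℝ)) * v t * (v t + t ^ (-(1:ℝ)/(q:ℝ))))
    (hv0 : ∀ t ≥ t0, 0 ≤ v t)
    (t1 : ℝ) (ht1 : t0 ≤ t1)
    (hsmall : ∀ t ≥ t1, M * t ^ (-(1:ℝ)/(q:ℝ)) ≤ -lam/4)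
    (δ : ℝ) (hδ : M * δ ≤ -lam/4)
    (hinv : ∀ t ≥ t1, v t ≤ δ) :
    ∀ t ≥ t1, lam * t ^ (-(n:ℝ)/(q:ℝ)) * v t + ρ t
      ≤ lam/2 * t ^ (-(n:ℝ)/(q:ℝ)) * v t := by
  intro t ht
  have hxt0 : t0 ≤ t := ht1.trans ht
  have ht0' : 0 < t := ht0.trans_le hxt0
  have hτ : 0 < t ^ (-(n:ℝ)/(q:ℝ)) := Real.rpow_pos_of_pos ht0' _
  have hvt : 0 ≤ v t := hv0 t hxt0
  have hMv : M * v t ≤ -lam/4 :=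
    le_trans (mul_le_mul_of_nonneg_left (hinv t ht) hM.le) hδ
  have hMs : M * t ^ (-(1:ℝ)/(q:ℝ)) ≤ -lam/4 := hsmall t ht
  have hρt : ρ t ≤ M * t ^ (-(n:ℝ)/(q:ℝ)) * v t * (v t + t ^ (-(1:ℝ)/(q:ℝ))) :=
    le_of_abs_le (hρ t hxt0)
  have e : lam * t ^ (-(n:ℝ)/(q:ℝ)) * v t
      + M * t ^ (-(n:ℝ)/(q:ℝ)) * v t * (v t + t ^ (-(1:ℝ)/(q:ℝ)))
      = t ^ (-(n:ℝ)/(q:ℝ)) * v t * (lam + (M * v t + M * t ^ (-(1:ℝ)/(q:ℝ)))) := by ring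
  have h3 : t ^ (-(n:ℝ)/(q:ℝ)) * v t * (lam + (M * v t + M * t ^ (-(1:ℝ)/(q:ℝ))))
      ≤ t ^ (-(n:ℝ)/(q:ℝ)) * v t * (lam/2) :=
    mul_le_mul_of_nonneg_left (by linarith) (mul_nonneg hτ.le hvt)
  have e2 : t ^ (-(n:ℝ)/(q:ℝ)) * v t * (lam/2) = lam/2 * t ^ (-(n:ℝ)/(q:ℝ)) * v t := by ring
  linarith

/-- Exponential decay from the differential inequality. -/
lemma aux_decay_exp (t0 t1 : ℝ) (ht0 : 0 < t0) (ht1 : t0 ≤ t1) (v D : ℝ → ℝ)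
    (hderiv : ∀ t ≥ t1, HasDerivAt v (D t) t)
    (α c : ℝ) (hα : 0 < α) (hc : 0 < c)
    (hDle : ∀ t ≥ t1, D t ≤ -(c*α) * t ^ (α-1) * v t) :
    ∀ t ≥ t1, v t ≤ v t1 * Real.exp (-(c * (t ^ α - t1 ^ α))) := by
  have ht10 : 0 < t1 := ht0.trans_le ht1
  have hg : ∀ x ≥ t1, HasDerivAt (fun y => v y * Real.exp (c * y ^ α))
      (D x * Real.exp (c * x ^ α)
        + v x * (Real.exp (c * x ^ α) * (c * (α * x ^ (α-1))))) x := by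
    intro x hx
    have hx0 : (0:ℝ) < x := ht10.trans_le hx
    have h1 : HasDerivAt (fun y : ℝ => c * y ^ α) (c * (α * x ^ (α-1))) x :=
      (Real.hasDerivAt_rpow_const (Or.inl hx0.ne')).const_mul c
    exact (hderiv x hx).mul h1.exp
  have hmono : AntitoneOn (fun y => v y * Real.exp (c * y ^ α)) (Set.Ici t1) := by
    apply antitoneOn_of_deriv_nonpos (convex_Ici t1)
    · exact fun x hx => ((hg x hx).continuousAt).continuousWithinAt
    · intro x hx
      rw [interior_Ici] at hx
      exact ((hg x (le_of_lt hx)).differentiableAt).differentiableWithinAt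
    · intro x hx
      rw [interior_Ici] at hx
      rw [(hg x (le_of_lt hx)).deriv]
      have hE : 0 < Real.exp (c * x ^ α) := Real.exp_pos _
      have h5 := mul_le_mul_of_nonneg_right (hDle x (le_of_lt hx)) hE.le
      have h6 : (-(c*α) * x ^ (α-1) * v x) * Real.exp (c * x ^ α)
          + v x * (Real.exp (c * x ^ α) * (c * (α * x ^ (α-1)))) = 0 := by ring
      linarith
  intro t ht
  have h := hmono Set.self_mem_Ici (Set.mem_Ici.2 ht) ht
  simp only at h
  have harg : -(c * (t ^ α - t1 ^ α)) = c * t1 ^ α - c * t ^ α := by ring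
  rw [harg, Real.exp_sub, ← mul_div_assoc, le_div_iff₀ (Real.exp_pos _)]
  exact h

/-- Polynomial decay from the differential inequality. -/
lemma aux_decay_poly (t0 t1 : ℝ) (ht0 : 0 < t0) (ht1 : t0 ≤ t1) (v D : ℝ → ℝ)
    (hderiv : ∀ t ≥ t1, HasDerivAt v (D t) t)
    (c : ℝ) (hc : 0 < c)
    (hDle : ∀ t ≥ t1, D t ≤ -c * t ^ (-1:ℝ) * v t) :
    ∀ t ≥ t1, v t ≤ v t1 * (t / t1) ^ (-c) := by
  have ht10 : 0 < t1 := ht0.trans_le ht1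
  have hg : ∀ x ≥ t1, HasDerivAt (fun y => v y * y ^ c)
      (D x * x ^ c + v x * (c * x ^ (c-1))) x := by
    intro x hx
    have hx0 : (0:ℝ) < x := ht10.trans_le hx
    exact (hderiv x hx).mul (Real.hasDerivAt_rpow_const (Or.inl hx0.ne'))
  have hmono : AntitoneOn (fun y => v y * y ^ c) (Set.Ici t1) := by
    apply antitoneOn_of_deriv_nonpos (convex_Ici t1)
    · exact fun x hx => ((hg x hx).continuousAt).continuousWithinAt
    · intro x hx
      rw [interior_Ici] at hx
      exact ((hg x (le_of_lt hx)).differentiableAt).differentiableWithinAt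
    · intro x hx
      rw [interior_Ici] at hx
      have hx0 : (0:ℝ) < x := ht10.trans hx
      rw [(hg x (le_of_lt hx)).deriv]
      have h5 := mul_le_mul_of_nonneg_right (hDle x (le_of_lt hx))
        (Real.rpow_nonneg hx0.le c)
      have h6 : (-c * x ^ (-1:ℝ) * v x) * x ^ c + v x * (c * x ^ (c-1)) = 0 := by
        rw [Real.rpow_sub hx0, Real.rpow_one, Real.rpow_neg_one]
        field_simp
        ring
      linarith
  intro t ht
  have htpos : 0 < t := ht10.trans_le ht
  have h := hmono Set.self_mem_Ici (Set.mem_Ici.2 ht) ht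
  simp only at h
  rw [Real.rpow_neg (by positivity), Real.div_rpow htpos.le ht10.le, inv_div,
    show v t1 * (t1 ^ c / t ^ c) = (v t1 * t1 ^ c) / t ^ c from by ring,
    le_div_iff₀ (Real.rpow_pos_of_pos htpos c)]
  exact h

/-- if `λ < 0` the zero solution is stable; moreover it is
exponentially stable when `n < q` and polynomially stable when `n = q`. -/
theorem stability_of_zero_linear_case
    (q n : ℕ) (hq : 0 < q) (hn : 0 < n)
    (lam d0 t0 M : ℝ) (hlam : lam < 0) (hd0 : 0 < d0) (ht0 : 0 < t0) (hM : 0 < M) :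
    (∀ ε ∈ Set.Ioc (0:ℝ) d0, ∃ δ > 0, ∃ t1 ≥ t0,
      ∀ v : ℝ → ℝ, IsAdmissibleLin q n lam d0 t0 M v → v t1 ≤ δ →
        ∀ t ≥ t1, 0 ≤ v t ∧ v t ≤ ε) ∧
    (∃ δ > 0, ∃ t1 ≥ t0, ∃ c > 0,
      ∀ v : ℝ → ℝ, IsAdmissibleLin q n lam d0 t0 M v → v t1 ≤ δ →
        ((n < q → ∀ t ≥ t1,
            v t ≤ v t1 *
              Real.exp (-(c * (t ^ (1 - (n:ℝ)/(q:ℝ)) - t1 ^ (1 - (n:ℝ)/(q:ℝ)))))) ∧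
         (n = q → ∀ t ≥ t1, v t ≤ v t1 * (t / t1) ^ (-c)))) := by
  obtain ⟨t1, ht1, hsmall⟩ := aux_t1 q hq lam M t0 hlam hM ht0
  have hδdef : (0:ℝ) < -lam/(4*M) := div_pos (by linarith) (by linarith)
  have hMδeq : M * (-lam/(4*M)) = -lam/4 := by field_simp
  constructor
  · intro ε hε
    obtain ⟨hε0, hεd⟩ := hε
    refine ⟨min ε (-lam/(4*M)), lt_min hε0 hδdef, t1, ht1, ?_⟩
    intro v hv hvδ t ht
    obtain ⟨hmem, ρ, hρ, hderiv⟩ := hv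
    have hMδ : M * min ε (-lam/(4*M)) ≤ -lam/4 := by
      calc M * min ε (-lam/(4*M)) ≤ M * (-lam/(4*M)) :=
            mul_le_mul_of_nonneg_left (min_le_right _ _) hM.le
        _ = -lam/4 := hMδeq
    have hinv := aux_invariance q n lam t0 M hlam ht0 v ρ hρ hderiv t1 ht1 hsmall
      _ (lt_min hε0 hδdef) hMδ hvδ
    exact ⟨(hmem t (ht1.trans ht)).1, le_trans (hinv t ht) (min_le_left _ _)⟩
  · refine ⟨-lam/(4*M), hδdef, t1, ht1, ?_⟩
    rcases lt_trichotomy n q with hnq | hnq | hnq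
    · -- exponential case n < q
      have hqR : (0:ℝ) < (q:ℝ) := by exact_mod_cast hq
      have hα : 0 < 1 - (n:ℝ)/(q:ℝ) := by
        have : (n:ℝ)/(q:ℝ) < 1 := (div_lt_one hqR).2 (by exact_mod_cast hnq)
        linarith
      refine ⟨(-lam/2)/(1 - (n:ℝ)/(q:ℝ)), div_pos (by linarith) hα, ?_⟩
      intro v hv hvδ
      obtain ⟨hmem, ρ, hρ, hderiv⟩ := hv
      have hv0 : ∀ s ≥ t0, 0 ≤ v s := fun s hs => (hmem s hs).1
      have hinv := aux_invariance q n lam t0 M hlam ht0 v ρ hρ hderiv t1 ht1 hsmall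
        _ hδdef hMδeq.le hvδ
      have hDb := aux_derivbound q n lam t0 M hlam ht0 hM v ρ hρ hv0 t1 ht1 hsmall
        _ hMδeq.le hinv
      refine ⟨fun _ => ?_, fun h => absurd h (by omega)⟩
      apply aux_decay_exp t0 t1 ht0 ht1 v (fun t => lam * t ^ (-(n:ℝ)/(q:ℝ)) * v t + ρ t)
        (fun t ht => hderiv t (ht1.trans ht)) (1 - (n:ℝ)/(q:ℝ)) _ hα
        (div_pos (by linarith) hα)
      intro t ht
      have e1 : -((-lam/2)/(1 - (n:ℝ)/(q:ℝ)) * (1 - (n:ℝ)/(q:ℝ))) = lam/2 := by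
        rw [div_mul_cancel₀ _ hα.ne']; ring
      have e2 : (1 - (n:ℝ)/(q:ℝ)) - 1 = -(n:ℝ)/(q:ℝ) := by ring
      rw [e1, e2]
      exact hDb t ht
    · -- polynomial case n = q
      refine ⟨-lam/2, by linarith, ?_⟩
      intro v hv hvδ
      obtain ⟨hmem, ρ, hρ, hderiv⟩ := hv
      have hv0 : ∀ s ≥ t0, 0 ≤ v s := fun s hs => (hmem s hs).1
      have hinv := aux_invariance q n lam t0 M hlam ht0 v ρ hρ hderiv t1 ht1 hsmall
        _ hδdef hMδeq.le hvδ
      have hDb := aux_derivbound q n lam t0 M hlam ht0 hM v ρ hρ hv0 t1 ht1 hsmall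
        _ hMδeq.le hinv
      refine ⟨fun h => absurd h (by omega), fun _ => ?_⟩
      apply aux_decay_poly t0 t1 ht0 ht1 v (fun t => lam * t ^ (-(n:ℝ)/(q:ℝ)) * v t + ρ t)
        (fun t ht => hderiv t (ht1.trans ht)) (-lam/2) (by linarith)
      intro t ht
      have hqR : ((q:ℝ)) ≠ 0 := Nat.cast_ne_zero.2 hq.ne'
      have he : -(n:ℝ)/(q:ℝ) = -1 := by rw [hnq, neg_div, div_self hqR]
      have e : -(-lam/2) * t ^ (-1:ℝ) * v t = lam/2 * t ^ (-1:ℝ) * v t := by ring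
      rw [e, ← he]
      exact hDb t ht
    · -- vacuous case n > q
      exact ⟨1, one_pos, fun v hv hvδ =>
        ⟨fun h => absurd h (by omega), fun h => absurd h (by omega)⟩⟩
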